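/- Let T' be a finite tree containing five distinct vertices v₁, w₁, w₂, w₃, v forming a path v₁–w₁–w₂–w₃–v, where in T' the degrees satisfy deg(v₁) = 1 and deg(w₁) = deg(w₂) = deg(w₃) = 2. Let T be the tree obtained from T' by adding three new vertices u₁, u₂, u₃ with edges u₁u₂, u₂u₃, and vu₁. Then γ₂(T) = γ₂(T') + 2 and α₂(T) = α₂(T') + 2; in particular α₂(T) − γ₂(T) = α₂(T') − γ₂(T'). -/

import Mathlib

open SimpleGraph

/-- `S` is a `k`-dominating set of the subgraph of `G` induced by `U`:
`S ⊆ U` and every vertex of `U` not in `S` has at least `k` neighbors in `S`. -/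
def IsKDomOn {V : Type*} (G : SimpleGraph V) (k : ℕ) (U S : Set V) : Prop :=
  S ⊆ U ∧ ∀ v ∈ U, v ∉ S → k ≤ (G.neighborSet v ∩ S).ncard

/-- `S` is a `k`-independent set of the subgraph of `G` induced by `U`:
`S ⊆ U` and every vertex of `S` has at most `k - 1` neighbors in `S`. -/
def IsKIndOn {V : Type*} (G : SimpleGraph V) (k : ℕ) (U S : Set V) : Prop :=
  S ⊆ U ∧ ∀ v ∈ S, (G.neighborSet v ∩ S).ncard ≤ k - 1

/-- The `k`-domination number of the subgraph of `G` induced by `U`. -/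
noncomputable def gammaK {V : Type*} (G : SimpleGraph V) (k : ℕ) (U : Set V) : ℕ :=
  sInf {n | ∃ S, IsKDomOn G k U S ∧ S.ncard = n}

/-- The `k`-independence number of the subgraph of `G` induced by `U`. -/
noncomputable def alphaK {V : Type*} (G : SimpleGraph V) (k : ℕ) (U : Set V) : ℕ :=
  sSup {n | ∃ S, IsKIndOn G k U S ∧ S.ncard = n}

private lemma two_le_ncard' {α : Type*} {s : Set α} (hs : s.Finite) {a b : α}
    (ha : a ∈ s) (hb : b ∈ s) (hab : a ≠ b) : 2 ≤ s.ncard := by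
  rw [← Set.ncard_pair hab]
  exact Set.ncard_le_ncard (by simp [Set.insert_subset_iff, ha, hb]) hs

private lemma eq_pair_of_ncard_two {α : Type*} {s : Set α} (hs : s.Finite) (h : s.ncard = 2)
    {a b : α} (ha : a ∈ s) (hb : b ∈ s) (hab : a ≠ b) : s = {a, b} :=
  (Set.eq_of_subset_of_ncard_le (by simp [Set.insert_subset_iff, ha, hb])
    (by rw [h, Set.ncard_pair hab]) hs).symm

private lemma ncard_split {V : Type*} [Fintype V] (S : Set (V ⊕ Fin 3)) :
    S.ncard = (Sum.inl ⁻¹' S).ncard + (S ∩ Set.range Sum.inr).ncard := by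
  have h : S = (Sum.inl '' (Sum.inl ⁻¹' S)) ∪ (S ∩ Set.range Sum.inr) := by
    ext a; cases a <;> simp
  conv_lhs => rw [h]
  rw [Set.ncard_union_eq (by rw [Set.disjoint_left]; rintro _ ⟨y, _, rfl⟩ ⟨_, i, hi⟩; cases hi),
    Set.ncard_image_of_injective _ Sum.inl_injective]

set_option maxHeartbeats 2000000 in
theorem stmt15 {V : Type*} [Fintype V] (T' : SimpleGraph V) (hT' : T'.IsTree)
    (v₁ w₁ w₂ w₃ v : V) (hdist : ([v₁, w₁, w₂, w₃, v] : List V).Pairwise (· ≠ ·))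
    (h1 : T'.Adj v₁ w₁) (h2 : T'.Adj w₁ w₂) (h3 : T'.Adj w₂ w₃) (h4 : T'.Adj w₃ v)
    (hd1 : (T'.neighborSet v₁).ncard = 1) (hdw1 : (T'.neighborSet w₁).ncard = 2)
    (hdw2 : (T'.neighborSet w₂).ncard = 2) (hdw3 : (T'.neighborSet w₃).ncard = 2)
    (T : SimpleGraph (V ⊕ Fin 3))
    (hadj : ∀ a b, T.Adj a b ↔
      ((∃ x y, T'.Adj x y ∧ a = Sum.inl x ∧ b = Sum.inl y) ∨
       (a = (Sum.inr 0 : V ⊕ Fin 3) ∧ b = Sum.inr 1) ∨ (a = Sum.inr 1 ∧ b = (Sum.inr 0 : V ⊕ Fin 3)) ∨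
       (a = (Sum.inr 1 : V ⊕ Fin 3) ∧ b = Sum.inr 2) ∨ (a = Sum.inr 2 ∧ b = (Sum.inr 1 : V ⊕ Fin 3)) ∨
       (a = Sum.inl v ∧ b = (Sum.inr 0 : V ⊕ Fin 3)) ∨ (a = (Sum.inr 0 : V ⊕ Fin 3) ∧ b = Sum.inl v))) :
    gammaK T 2 Set.univ = gammaK T' 2 Set.univ + 2 ∧
    alphaK T 2 Set.univ = alphaK T' 2 Set.univ + 2 ∧
    (alphaK T 2 Set.univ : ℤ) - (gammaK T 2 Set.univ : ℤ) =
      (alphaK T' 2 Set.univ : ℤ) - (gammaK T' 2 Set.univ : ℤ) := by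
  classical
  simp only [List.pairwise_cons, List.mem_cons, List.not_mem_nil, List.mem_singleton,
    List.Pairwise.nil, or_false, forall_eq_or_imp, forall_eq] at hdist
  obtain ⟨⟨h12, h13, h14, h15⟩, ⟨h23, h24, h25⟩, ⟨h34, h35⟩, h45, -⟩ := hdist
  -- neighbor sets in T'
  have hNv₁ : T'.neighborSet v₁ = {w₁} := by
    obtain ⟨a, ha⟩ := Set.ncard_eq_one.1 hd1
    have hm : w₁ ∈ T'.neighborSet v₁ := h1
    rw [ha] at hm ⊢; simp_all
  have hNw₁ : T'.neighborSet w₁ = {v₁, w₂} :=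
    eq_pair_of_ncard_two (Set.toFinite _) hdw1 h1.symm h2 h13
  have hNw₂ : T'.neighborSet w₂ = {w₁, w₃} :=
    eq_pair_of_ncard_two (Set.toFinite _) hdw2 h2.symm h3 h24
  have hNw₃ : T'.neighborSet w₃ = {w₂, v} :=
    eq_pair_of_ncard_two (Set.toFinite _) hdw3 h3.symm h4 h35
  -- neighbor sets in T
  have hNinl : ∀ x : V, x ≠ v → T.neighborSet (Sum.inl x) = Sum.inl '' T'.neighborSet x := by
    intro x hx
    ext b; cases b with
    | inl y => simp [mem_neighborSet, hadj]
    | inr i => simp [mem_neighborSet, hadj, hx]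
  have hNinlv : T.neighborSet (Sum.inl v) =
      Sum.inl '' T'.neighborSet v ∪ {(Sum.inr 0 : V ⊕ Fin 3)} := by
    ext b; cases b with
    | inl y => simp [mem_neighborSet, hadj]
    | inr i => simp [mem_neighborSet, hadj, eq_comm (a := i)]
  have hN0 : T.neighborSet (Sum.inr 0) = {Sum.inl v, (Sum.inr 1 : V ⊕ Fin 3)} := by
    ext b; cases b with
    | inl y => simp [mem_neighborSet, hadj, eq_comm (a := y)]
    | inr i => simp [mem_neighborSet, hadj]
  have hN1 : T.neighborSet (Sum.inr 1) = {(Sum.inr 0 : V ⊕ Fin 3), Sum.inr 2} := by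
    ext b; cases b with
    | inl y => simp [mem_neighborSet, hadj]
    | inr i => simp [mem_neighborSet, hadj]
  have hN2 : T.neighborSet (Sum.inr 2) = {(Sum.inr 1 : V ⊕ Fin 3)} := by
    ext b; cases b with
    | inl y => simp [mem_neighborSet, hadj]
    | inr i => simp [mem_neighborSet, hadj]
  -- transfer lemmas
  have hsub : ∀ (S : Set (V ⊕ Fin 3)) (x : V),
      Sum.inl '' (T'.neighborSet x ∩ Sum.inl ⁻¹' S) ⊆ T.neighborSet (Sum.inl x) ∩ S := by
    rintro S x b ⟨y, ⟨hy, hyS⟩, rfl⟩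
    exact ⟨(hadj _ _).2 (Or.inl ⟨x, y, hy, rfl, rfl⟩), hyS⟩
  have hmono : ∀ (S : Set (V ⊕ Fin 3)) (x : V),
      (T'.neighborSet x ∩ Sum.inl ⁻¹' S).ncard ≤ (T.neighborSet (Sum.inl x) ∩ S).ncard := by
    intro S x
    rw [← Set.ncard_image_of_injective (T'.neighborSet x ∩ Sum.inl ⁻¹' S) Sum.inl_injective]
    exact Set.ncard_le_ncard (hsub S x) (Set.toFinite _)
  have hkey : ∀ (S : Set (V ⊕ Fin 3)) (x : V), x ≠ v →
      (T.neighborSet (Sum.inl x) ∩ S).ncard = (T'.neighborSet x ∩ Sum.inl ⁻¹' S).ncard := by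
    intro S x hx
    rw [← Set.ncard_image_of_injective (T'.neighborSet x ∩ Sum.inl ⁻¹' S) Sum.inl_injective]
    congr 1
    rw [hNinl x hx]
    ext b
    constructor
    · rintro ⟨⟨y, hy, rfl⟩, hbS⟩; exact ⟨y, ⟨hy, hbS⟩, rfl⟩
    · rintro ⟨y, ⟨hy, hyS⟩, rfl⟩; exact ⟨⟨y, hy, rfl⟩, hyS⟩
  -- extremal sets exist
  obtain ⟨D', hD', hD'card⟩ : ∃ S, IsKDomOn T' 2 Set.univ S ∧ S.ncard = gammaK T' 2 Set.univ :=
    Nat.sInf_mem (s := {n | ∃ S, IsKDomOn T' 2 Set.univ S ∧ S.ncard = n})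
      ⟨Set.univ.ncard, Set.univ, ⟨subset_rfl, fun x _ hx => (hx trivial).elim⟩, rfl⟩
  obtain ⟨S, hS, hScard⟩ : ∃ S, IsKDomOn T 2 Set.univ S ∧ S.ncard = gammaK T 2 Set.univ :=
    Nat.sInf_mem (s := {n | ∃ S, IsKDomOn T 2 Set.univ S ∧ S.ncard = n})
      ⟨Set.univ.ncard, Set.univ, ⟨subset_rfl, fun x _ hx => (hx trivial).elim⟩, rfl⟩
  have hbddT : BddAbove {n | ∃ S : Set (V ⊕ Fin 3), IsKIndOn T 2 Set.univ S ∧ S.ncard = n} := by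
    refine ⟨Fintype.card (V ⊕ Fin 3), ?_⟩
    rintro n ⟨S₀, _, rfl⟩
    simpa [Set.ncard_univ, Nat.card_eq_fintype_card] using
      Set.ncard_le_ncard (Set.subset_univ S₀) (Set.toFinite _)
  have hbddT' : BddAbove {n | ∃ S : Set V, IsKIndOn T' 2 Set.univ S ∧ S.ncard = n} := by
    refine ⟨Fintype.card V, ?_⟩
    rintro n ⟨S₀, _, rfl⟩
    simpa [Set.ncard_univ, Nat.card_eq_fintype_card] using
      Set.ncard_le_ncard (Set.subset_univ S₀) (Set.toFinite _)
  obtain ⟨I', hI', hI'card⟩ : ∃ S, IsKIndOn T' 2 Set.univ S ∧ S.ncard = alphaK T' 2 Set.univ :=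
    Nat.sSup_mem (s := {n | ∃ S, IsKIndOn T' 2 Set.univ S ∧ S.ncard = n})
      ⟨0, ∅, ⟨Set.empty_subset _, fun x hx => absurd hx (Set.notMem_empty x)⟩,
      Set.ncard_empty _⟩ hbddT'
  obtain ⟨I, hI, hIcard⟩ : ∃ S, IsKIndOn T 2 Set.univ S ∧ S.ncard = alphaK T 2 Set.univ :=
    Nat.sSup_mem (s := {n | ∃ S, IsKIndOn T 2 Set.univ S ∧ S.ncard = n})
      ⟨0, ∅, ⟨Set.empty_subset _, fun x hx => absurd hx (Set.notMem_empty x)⟩,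
      Set.ncard_empty _⟩ hbddT
  have hγ'le : ∀ S' : Set V, IsKDomOn T' 2 Set.univ S' → gammaK T' 2 Set.univ ≤ S'.ncard :=
    fun S' h => Nat.sInf_le ⟨S', h, rfl⟩
  -- γ(T) ≤ γ(T') + 2
  have ineq1 : gammaK T 2 Set.univ ≤ gammaK T' 2 Set.univ + 2 := by
    apply Nat.sInf_le
    refine ⟨Sum.inl '' D' ∪ {(Sum.inr 0 : V ⊕ Fin 3), Sum.inr 2}, ⟨Set.subset_univ _, ?_⟩, ?_⟩
    · rintro (x | i) - ha
      · have hx : x ∉ D' := fun h => ha (Or.inl ⟨x, h, rfl⟩)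
        have h2x := hD'.2 x trivial hx
        have hpre : D' ⊆ Sum.inl ⁻¹' (Sum.inl '' D' ∪ {(Sum.inr 0 : V ⊕ Fin 3), Sum.inr 2}) :=
          fun y hy => Or.inl ⟨y, hy, rfl⟩
        calc (2 : ℕ) ≤ (T'.neighborSet x ∩ D').ncard := h2x
          _ ≤ (T'.neighborSet x ∩ Sum.inl ⁻¹' (Sum.inl '' D' ∪ {(Sum.inr 0 : V ⊕ Fin 3), Sum.inr 2})).ncard :=
            Set.ncard_le_ncard (Set.inter_subset_inter_right _ hpre) (Set.toFinite _)
          _ ≤ _ := hmono _ x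
      · fin_cases i
        · exact absurd (Or.inr (Or.inl rfl)) ha
        · show 2 ≤ (T.neighborSet (Sum.inr 1) ∩
            (Sum.inl '' D' ∪ {(Sum.inr 0 : V ⊕ Fin 3), Sum.inr 2})).ncard
          rw [hN1]
          exact two_le_ncard' (Set.toFinite _)
            (a := (Sum.inr 0 : V ⊕ Fin 3)) (b := (Sum.inr 2 : V ⊕ Fin 3))
            ⟨by simp, by simp⟩ ⟨by simp, by simp⟩ (by simp)
        · exact absurd (Or.inr (Or.inr rfl)) ha
    · rw [Set.ncard_union_eq
          (by rw [Set.disjoint_left]; rintro _ ⟨y, _, rfl⟩ h; simp at h)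
          (Set.toFinite _) (Set.toFinite _),
        Set.ncard_image_of_injective _ Sum.inl_injective, Set.ncard_pair (by simp), hD'card]
  -- γ(T') + 2 ≤ γ(T)
  have ineq2 : gammaK T' 2 Set.univ + 2 ≤ gammaK T 2 Set.univ := by
    rw [← hScard, ncard_split S]
    set Sl := Sum.inl ⁻¹' S with hSldef
    have hgen : ∀ x : V, x ≠ v → x ∉ Sl → 2 ≤ (T'.neighborSet x ∩ Sl).ncard := by
      intro x hxv hx
      have h := hS.2 (Sum.inl x) trivial hx
      rwa [hkey S x hxv] at h
    have hu2 : (Sum.inr 2 : V ⊕ Fin 3) ∈ S := by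
      by_contra h
      have h2 := hS.2 _ trivial h
      rw [hN2] at h2
      have h3 : ({(Sum.inr 1 : V ⊕ Fin 3)} ∩ S).ncard ≤ 1 :=
        le_trans (Set.ncard_le_ncard Set.inter_subset_left (Set.toFinite _)) (Set.ncard_singleton _).le
      omega
    by_cases hv : v ∈ Sl
    · have hdom : IsKDomOn T' 2 Set.univ Sl :=
        ⟨Set.subset_univ _, fun x _ hx => hgen x (fun e => hx (e ▸ hv)) hx⟩
      have h01 : (Sum.inr 0 : V ⊕ Fin 3) ∈ S ∨ (Sum.inr 1 : V ⊕ Fin 3) ∈ S := by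
        by_contra hc
        push_neg at hc
        have h2 := hS.2 (Sum.inr 1) trivial hc.2
        rw [hN1] at h2
        have hss : ({(Sum.inr 0 : V ⊕ Fin 3), Sum.inr 2} ∩ S) ⊆ {(Sum.inr 2 : V ⊕ Fin 3)} := by
          rintro b ⟨hb1, hb2⟩
          rcases hb1 with rfl | hb1
          · exact absurd hb2 hc.1
          · exact hb1
        have h3 := le_trans (Set.ncard_le_ncard hss (Set.toFinite _)) (Set.ncard_singleton _).le
        omega
      have hr : 2 ≤ (S ∩ Set.range Sum.inr).ncard := by
        rcases h01 with h | h
        · exact two_le_ncard' (Set.toFinite _) ⟨h, ⟨0, rfl⟩⟩ ⟨hu2, ⟨2, rfl⟩⟩ (by simp)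
        · exact two_le_ncard' (Set.toFinite _) ⟨h, ⟨1, rfl⟩⟩ ⟨hu2, ⟨2, rfl⟩⟩ (by simp)
      have h5 := hγ'le Sl hdom
      omega
    · have hu0 : (Sum.inr 0 : V ⊕ Fin 3) ∈ S := by
        by_contra h
        have h2 := hS.2 _ trivial h
        rw [hN0] at h2
        have hss : ({Sum.inl v, (Sum.inr 1 : V ⊕ Fin 3)} ∩ S) ⊆ {(Sum.inr 1 : V ⊕ Fin 3)} := by
          rintro b ⟨hb1, hb2⟩
          rcases hb1 with rfl | hb1
          · exact absurd hb2 hv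
          · exact hb1
        have h3 := le_trans (Set.ncard_le_ncard hss (Set.toFinite _)) (Set.ncard_singleton _).le
        omega
      by_cases hu1 : (Sum.inr 1 : V ⊕ Fin 3) ∈ S
      · have hr : 3 ≤ (S ∩ Set.range Sum.inr).ncard := by
          have hss : ({(Sum.inr 0 : V ⊕ Fin 3), Sum.inr 1, Sum.inr 2} : Set (V ⊕ Fin 3)) ⊆
              S ∩ Set.range Sum.inr := by
            rintro b hb
            rcases hb with rfl | rfl | rfl
            · exact ⟨hu0, ⟨0, rfl⟩⟩
            · exact ⟨hu1, ⟨1, rfl⟩⟩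
            · exact ⟨hu2, ⟨2, rfl⟩⟩
          calc (3 : ℕ) = ({(Sum.inr 0 : V ⊕ Fin 3), Sum.inr 1, Sum.inr 2} : Set (V ⊕ Fin 3)).ncard := by
                rw [Set.ncard_insert_of_notMem (by simp), Set.ncard_pair (by simp)]
            _ ≤ _ := Set.ncard_le_ncard hss (Set.toFinite _)
        have hdom : IsKDomOn T' 2 Set.univ (insert v Sl) := by
          refine ⟨Set.subset_univ _, fun x _ hx => ?_⟩
          have hxv : x ≠ v := fun e => hx (e ▸ Set.mem_insert _ _)
          have hxSl : x ∉ Sl := fun h => hx (Set.mem_insert_of_mem _ h)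
          exact le_trans (hgen x hxv hxSl) (Set.ncard_le_ncard
            (Set.inter_subset_inter_right _ (Set.subset_insert _ _)) (Set.toFinite _))
        have h5 := hγ'le _ hdom
        have h6 := Set.ncard_insert_le v Sl
        omega
      · have hr : 2 ≤ (S ∩ Set.range Sum.inr).ncard :=
          two_le_ncard' (Set.toFinite _) ⟨hu0, ⟨0, rfl⟩⟩ ⟨hu2, ⟨2, rfl⟩⟩ (by simp)
        have hv₁ : v₁ ∈ Sl := by
          by_contra h
          have hx := hgen v₁ h15 h
          rw [hNv₁] at hx
          have h3 : ({w₁} ∩ Sl).ncard ≤ 1 :=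
            le_trans (Set.ncard_le_ncard Set.inter_subset_left (Set.toFinite _)) (Set.ncard_singleton _).le
          omega
        have hw3 : w₃ ∈ Sl := by
          by_contra h
          have hx := hgen w₃ h45 h
          rw [hNw₃] at hx
          have hss : ({w₂, v} ∩ Sl) ⊆ {w₂} := by
            rintro b ⟨hb1, hb2⟩
            rcases hb1 with rfl | hb1
            · rfl
            · rw [Set.mem_singleton_iff] at hb1; exact absurd (hb1 ▸ hb2) hv
          have h3 := le_trans (Set.ncard_le_ncard hss (Set.toFinite _)) (Set.ncard_singleton _).le
          omega
        have hw12 : w₁ ∈ Sl ∨ w₂ ∈ Sl := by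
          by_contra hc
          push_neg at hc
          have hx := hgen w₂ h35 hc.2
          rw [hNw₂] at hx
          have hss : ({w₁, w₃} ∩ Sl) ⊆ {w₃} := by
            rintro b ⟨hb1, hb2⟩
            rcases hb1 with rfl | hb1
            · exact absurd hb2 hc.1
            · exact hb1
          have h3 := le_trans (Set.ncard_le_ncard hss (Set.toFinite _)) (Set.ncard_singleton _).le
          omega
        have hvS' : v ∈ (Sl \ {w₁, w₃}) ∪ {w₂, v} := Or.inr (Or.inr rfl)
        have hw2S' : w₂ ∈ (Sl \ {w₁, w₃}) ∪ {w₂, v} := Or.inr (Or.inl rfl)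
        have hv₁S' : v₁ ∈ (Sl \ {w₁, w₃}) ∪ {w₂, v} := Or.inl ⟨hv₁, by simp [h12, h14]⟩
        have hdom : IsKDomOn T' 2 Set.univ ((Sl \ {w₁, w₃}) ∪ {w₂, v}) := by
          refine ⟨Set.subset_univ _, fun x _ hx => ?_⟩
          by_cases hxw1 : x = w₁
          · subst hxw1
            rw [hNw₁]
            exact two_le_ncard' (Set.toFinite _) ⟨Or.inl rfl, hv₁S'⟩ ⟨Or.inr rfl, hw2S'⟩ h13
          by_cases hxw3 : x = w₃
          · subst hxw3
            rw [hNw₃]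
            exact two_le_ncard' (Set.toFinite _) ⟨Or.inl rfl, hw2S'⟩ ⟨Or.inr rfl, hvS'⟩ h35
          have hxSl : x ∉ Sl := fun h => hx (Or.inl ⟨h, by simp [hxw1, hxw3]⟩)
          have hxv : x ≠ v := fun e => hx (e ▸ hvS')
          have hxw2 : x ≠ w₂ := fun e => hx (e ▸ hw2S')
          refine le_trans (hgen x hxv hxSl) (Set.ncard_le_ncard ?_ (Set.toFinite _))
          rintro y ⟨hyN, hySl⟩
          refine ⟨hyN, ?_⟩
          by_cases hyw1 : y = w₁
          · have hxm : x ∈ T'.neighborSet w₁ := SimpleGraph.Adj.symm (hyw1 ▸ hyN)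
            rw [hNw₁] at hxm
            rcases hxm with rfl | hxx
            · exact absurd hv₁ hxSl
            · rw [Set.mem_singleton_iff] at hxx; exact absurd hxx hxw2
          by_cases hyw3 : y = w₃
          · have hxm : x ∈ T'.neighborSet w₃ := SimpleGraph.Adj.symm (hyw3 ▸ hyN)
            rw [hNw₃] at hxm
            rcases hxm with rfl | hxx
            · exact absurd rfl hxw2
            · rw [Set.mem_singleton_iff] at hxx; exact absurd hxx hxv
          exact Or.inl ⟨hySl, by simp [hyw1, hyw3]⟩
        have hsize : ((Sl \ {w₁, w₃}) ∪ {w₂, v}).ncard ≤ Sl.ncard := by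
          by_cases hw1 : w₁ ∈ Sl
          · have hd : ({w₁, w₃} : Set V) ⊆ Sl := by
              rintro b hb
              rcases hb with rfl | hb
              · exact hw1
              · rw [Set.mem_singleton_iff] at hb; exact hb ▸ hw3
            have hc1 := Set.ncard_union_le (Sl \ {w₁, w₃}) ({w₂, v} : Set V)
            have hc2 : (Sl \ {w₁, w₃}).ncard = Sl.ncard - 2 := by
              rw [Set.ncard_diff hd (Set.toFinite _), Set.ncard_pair h24]
            have hc3 : 2 ≤ Sl.ncard := two_le_ncard' (Set.toFinite _) hw1 hw3 h24
            have hc4 : ({w₂, v} : Set V).ncard = 2 := Set.ncard_pair h35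
            omega
          · have hw2 : w₂ ∈ Sl := hw12.resolve_left hw1
            have hss : (Sl \ {w₁, w₃}) ∪ {w₂, v} ⊆ insert v (Sl \ {w₃}) := by
              rintro b hb
              rcases hb with ⟨hb, hbn⟩ | hb
              · exact Set.mem_insert_of_mem _ ⟨hb, fun h => hbn (Or.inr h)⟩
              · rcases hb with rfl | hb
                · exact Set.mem_insert_of_mem _ ⟨hw2, by simp [h34]⟩
                · rw [Set.mem_singleton_iff] at hb; exact hb ▸ Set.mem_insert _ _
            have hc1 := Set.ncard_le_ncard hss (Set.toFinite _)
            have hc2 := Set.ncard_insert_le v (Sl \ {w₃})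
            have hc3 : (Sl \ {w₃}).ncard = Sl.ncard - 1 :=
              Set.ncard_diff_singleton_of_mem hw3
            have hc4 : 0 < Sl.ncard := (Set.ncard_pos (Set.toFinite _)).2 ⟨w₃, hw3⟩
            omega
        have h5 := hγ'le _ hdom
        omega
  -- α(T') + 2 ≤ α(T)
  have ineq3 : alphaK T' 2 Set.univ + 2 ≤ alphaK T 2 Set.univ := by
    apply le_csSup hbddT
    refine ⟨Sum.inl '' I' ∪ {(Sum.inr 1 : V ⊕ Fin 3), Sum.inr 2}, ⟨Set.subset_univ _, ?_⟩, ?_⟩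
    · rintro (x | i) ha
      · have hx : x ∈ I' := by simpa using ha
        have hIx := hI'.2 x hx
        have hss : T.neighborSet (Sum.inl x) ∩ (Sum.inl '' I' ∪ {(Sum.inr 1 : V ⊕ Fin 3), Sum.inr 2}) ⊆
            Sum.inl '' (T'.neighborSet x ∩ I') := by
          rintro b ⟨hbN, hbS⟩
          by_cases hxv : x = v
          · subst hxv
            rw [hNinlv] at hbN
            rcases hbN with ⟨y, hy, rfl⟩ | hb0
            · exact ⟨y, ⟨hy, by simpa using hbS⟩, rfl⟩
            · rw [Set.mem_singleton_iff] at hb0; subst hb0; simp at hbS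
          · rw [hNinl x hxv] at hbN
            obtain ⟨y, hy, rfl⟩ := hbN
            exact ⟨y, ⟨hy, by simpa using hbS⟩, rfl⟩
        calc (T.neighborSet (Sum.inl x) ∩ (Sum.inl '' I' ∪ {(Sum.inr 1 : V ⊕ Fin 3), Sum.inr 2})).ncard
            ≤ (Sum.inl '' (T'.neighborSet x ∩ I')).ncard :=
              Set.ncard_le_ncard hss (Set.toFinite _)
          _ = (T'.neighborSet x ∩ I').ncard := Set.ncard_image_of_injective _ Sum.inl_injective
          _ ≤ 2 - 1 := hIx
      · fin_cases i
        · simp at ha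
        · show (T.neighborSet (Sum.inr 1) ∩
            (Sum.inl '' I' ∪ {(Sum.inr 1 : V ⊕ Fin 3), Sum.inr 2})).ncard ≤ 2 - 1
          rw [hN1]
          have hss : ({(Sum.inr 0 : V ⊕ Fin 3), Sum.inr 2} ∩
              (Sum.inl '' I' ∪ {(Sum.inr 1 : V ⊕ Fin 3), Sum.inr 2})) ⊆ {(Sum.inr 2 : V ⊕ Fin 3)} := by
            rintro b ⟨hb1, hb2⟩
            rcases hb1 with rfl | hb1
            · simp at hb2
            · exact hb1
          exact le_trans (Set.ncard_le_ncard hss (Set.toFinite _)) (Set.ncard_singleton _).le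
        · show (T.neighborSet (Sum.inr 2) ∩
            (Sum.inl '' I' ∪ {(Sum.inr 1 : V ⊕ Fin 3), Sum.inr 2})).ncard ≤ 2 - 1
          rw [hN2]
          exact le_trans (Set.ncard_le_ncard Set.inter_subset_left (Set.toFinite _))
            (Set.ncard_singleton _).le
    · rw [Set.ncard_union_eq
          (by rw [Set.disjoint_left]; rintro _ ⟨y, _, rfl⟩ h; simp at h)
          (Set.toFinite _) (Set.toFinite _),
        Set.ncard_image_of_injective _ Sum.inl_injective, Set.ncard_pair (by simp), hI'card]
  -- α(T) ≤ α(T') + 2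
  have ineq4 : alphaK T 2 Set.univ ≤ alphaK T' 2 Set.univ + 2 := by
    rw [← hIcard, ncard_split I]
    set Il := Sum.inl ⁻¹' I with hIldef
    have hind : IsKIndOn T' 2 Set.univ Il :=
      ⟨Set.subset_univ _, fun x hx => le_trans (hmono I x) (hI.2 (Sum.inl x) hx)⟩
    have hIr : (I ∩ Set.range Sum.inr).ncard ≤ 2 := by
      by_contra hco
      push_neg at hco
      have hss : I ∩ Set.range Sum.inr ⊆
          ({(Sum.inr 0 : V ⊕ Fin 3), Sum.inr 1, Sum.inr 2} : Set (V ⊕ Fin 3)) := by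
        rintro b ⟨_, i, rfl⟩
        fin_cases i
        · exact Or.inl rfl
        · exact Or.inr (Or.inl rfl)
        · exact Or.inr (Or.inr rfl)
      have htriple : ({(Sum.inr 0 : V ⊕ Fin 3), Sum.inr 1, Sum.inr 2} : Set (V ⊕ Fin 3)).ncard = 3 := by
        rw [Set.ncard_insert_of_notMem (by simp), Set.ncard_pair (by simp)]
      have heq := Set.eq_of_subset_of_ncard_le hss (by omega) (Set.toFinite _)
      have hm0 : (Sum.inr 0 : V ⊕ Fin 3) ∈ I := by
        have : (Sum.inr 0 : V ⊕ Fin 3) ∈ I ∩ Set.range Sum.inr := heq ▸ Or.inl rfl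
        exact this.1
      have hm1 : (Sum.inr 1 : V ⊕ Fin 3) ∈ I := by
        have : (Sum.inr 1 : V ⊕ Fin 3) ∈ I ∩ Set.range Sum.inr := heq ▸ Or.inr (Or.inl rfl)
        exact this.1
      have hm2 : (Sum.inr 2 : V ⊕ Fin 3) ∈ I := by
        have : (Sum.inr 2 : V ⊕ Fin 3) ∈ I ∩ Set.range Sum.inr := heq ▸ Or.inr (Or.inr rfl)
        exact this.1
      have hIx := hI.2 (Sum.inr 1) hm1
      rw [hN1] at hIx
      have h2le : 2 ≤ ({(Sum.inr 0 : V ⊕ Fin 3), Sum.inr 2} ∩ I).ncard :=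
        two_le_ncard' (Set.toFinite _) ⟨Or.inl rfl, hm0⟩ ⟨Or.inr rfl, hm2⟩ (by simp)
      omega
    have h5 : Il.ncard ≤ alphaK T' 2 Set.univ := le_csSup hbddT' ⟨Il, hind, rfl⟩
    omega
  exact ⟨le_antisymm ineq1 ineq2, le_antisymm ineq4 ineq3, by
    have e1 := le_antisymm ineq1 ineq2
    have e2 := le_antisymm ineq4 ineq3
    rw [e1, e2]; push_cast; ring⟩
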